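/- Let (a_k)_{k≥0} and (b_k)_{k≥0} be complex numbers with a₀ = −3 and b₀ = 3, and set a = Σ_{k≥0} a_k z^{k−2} and b = Σ_{k≥0} b_k z^{k−3} in ℂ((z)); thus the third-order operator L = ∂³ + a(z)∂ + b(z) has indicial polynomial (m+1)(m−1)(m−3) at z = 0, i.e., indices −1, 1, 3 (gaps q = r = 2). Then the following are equivalent: (a) for every λ ∈ ℂ, the set of ψ ∈ ℂ((z)) satisfying ψ''' + aψ' + bψ = λψ contains three linearly independent elements; (b) a₁ = 0, b₂ = 0, a₂ = −b₁²/3, and b₄ = a₄ + (b₁a₃)/3. -/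

import Mathlib

open HahnSeries

/-- The formal derivative of a formal Laurent series `Σₙ aₙ zⁿ ↦ Σₙ n aₙ z^{n−1}`. -/
noncomputable def laurentDeriv (f : LaurentSeries ℂ) : LaurentSeries ℂ where
  coeff n := ((n + 1 : ℤ) : ℂ) * f.coeff (n + 1)
  isPWO_support' := by
    refine Set.IsPWO.mono (Set.IsPWO.image_of_monotone f.isPWO_support
      (f := fun m : ℤ => m - 1) (fun a b hab => by simpa using hab)) ?_
    intro n hn
    have h1 : f.coeff (n + 1) ≠ 0 := by
      intro h0
      simp only [Function.mem_support, h0, mul_zero, ne_eq, not_true_eq_false] at hn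
    exact ⟨n + 1, h1, by ring⟩


lemma ofPS_coeff_neg (φ : PowerSeries ℂ) {g : ℤ} (hg : g < 0) :
    (ofPowerSeries ℤ ℂ φ).coeff g = 0 := by
  rw [ofPowerSeries_apply]
  apply embDomain_notin_range
  rintro ⟨n, hn⟩
  have : ((n : ℤ)) = g := hn
  omega

lemma sm_coeff (m : ℤ) (φ : PowerSeries ℂ) (n : ℤ) :
    (HahnSeries.single m 1 * ofPowerSeries ℤ ℂ φ).coeff n
      = if m ≤ n then PowerSeries.coeff (n - m).toNat φ else 0 := by
  have key : (HahnSeries.single m 1 * ofPowerSeries ℤ ℂ φ).coeff (n - m + m)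
      = 1 * (ofPowerSeries ℤ ℂ φ).coeff (n - m) := coeff_single_mul_add
  have hnm : n - m + m = n := by ring
  rw [hnm, one_mul] at key
  by_cases h : m ≤ n
  · rw [if_pos h, key]
    have h2 : ((n - m).toNat : ℤ) = n - m := by omega
    rw [← h2, ofPowerSeries_apply_coeff, Int.toNat_natCast]
  · rw [if_neg h, key, ofPS_coeff_neg]
    omega

@[simp] lemma laurentDeriv_coeff (f : LaurentSeries ℂ) (n : ℤ) :
    (laurentDeriv f).coeff n = ((n + 1 : ℤ) : ℂ) * f.coeff (n + 1) := rfl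

/-- twisted derivative on power series: coefficient `j ↦ (j+m)·φ_j`. -/
noncomputable def twist (m : ℤ) (φ : PowerSeries ℂ) : PowerSeries ℂ :=
  PowerSeries.mk (fun j => ((j : ℂ) + (m : ℂ)) * PowerSeries.coeff j φ)

@[simp] lemma twist_coeff (m : ℤ) (φ : PowerSeries ℂ) (j : ℕ) :
    PowerSeries.coeff j (twist m φ) = ((j : ℂ) + (m : ℂ)) * PowerSeries.coeff j φ :=
  PowerSeries.coeff_mk _ _

lemma laurentDeriv_sm (m : ℤ) (φ : PowerSeries ℂ) :
    laurentDeriv (HahnSeries.single m 1 * ofPowerSeries ℤ ℂ φ)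
      = HahnSeries.single (m - 1) 1 * ofPowerSeries ℤ ℂ (twist m φ) := by
  ext n
  rw [laurentDeriv_coeff, sm_coeff, sm_coeff]
  by_cases h : m ≤ n + 1
  · rw [if_pos h, if_pos (by omega), twist_coeff]
    have h2 : (n + 1 - m).toNat = (n - (m - 1)).toNat := by omega
    have h3 : ((n - (m - 1)).toNat : ℤ) = n - m + 1 := by omega
    have h4 : ((n - (m - 1)).toNat : ℂ) = (n : ℂ) - (m : ℂ) + 1 := by
      exact_mod_cast congrArg (Int.cast : ℤ → ℂ) h3
    rw [h2, h4]
    push_cast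
    ring
  · rw [if_neg h, if_neg (by omega), mul_zero]

lemma sm_mul_sm (r s : ℤ) (φ χ : PowerSeries ℂ) :
    (HahnSeries.single r 1 * ofPowerSeries ℤ ℂ φ) * (HahnSeries.single s 1 * ofPowerSeries ℤ ℂ χ)
      = HahnSeries.single (r + s) 1 * ofPowerSeries ℤ ℂ (φ * χ) := by
  rw [mul_mul_mul_comm, single_mul_single, one_mul, ← map_mul]

lemma smul_sm (lam : ℂ) (m : ℤ) (φ : PowerSeries ℂ) :
    lam • (HahnSeries.single m 1 * ofPowerSeries ℤ ℂ φ)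
      = HahnSeries.single m 1 * ofPowerSeries ℤ ℂ (lam • φ) := by
  ext n
  rw [HahnSeries.coeff_smul, sm_coeff, sm_coeff]
  by_cases h : m ≤ n
  · rw [if_pos h, if_pos h, PowerSeries.coeff_smul, smul_eq_mul]
  · rw [if_neg h, if_neg h, smul_zero]

def Eqn (aseq bseq : ℕ → ℂ) (lam : ℂ) (m : ℤ) (c : ℕ → ℂ) : Prop :=
  ∀ j : ℕ,
    ((j : ℂ) + (m : ℂ) - 2) * ((j : ℂ) + (m : ℂ) - 1) * ((j : ℂ) + (m : ℂ)) * c j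
      + (∑ p ∈ Finset.HasAntidiagonal.antidiagonal j, aseq p.1 * (((p.2 : ℂ) + (m : ℂ)) * c p.2))
      + (∑ p ∈ Finset.HasAntidiagonal.antidiagonal j, bseq p.1 * c p.2)
      = lam * (if 3 ≤ j then c (j - 3) else 0)

lemma key (aseq bseq : ℕ → ℂ) (lam : ℂ) (m : ℤ) (φ : PowerSeries ℂ) :
    (laurentDeriv (laurentDeriv (laurentDeriv (HahnSeries.single m 1 * ofPowerSeries ℤ ℂ φ)))
        + (HahnSeries.single (-2 : ℤ) 1 * ofPowerSeries ℤ ℂ (PowerSeries.mk aseq))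
            * laurentDeriv (HahnSeries.single m 1 * ofPowerSeries ℤ ℂ φ)
        + (HahnSeries.single (-3 : ℤ) 1 * ofPowerSeries ℤ ℂ (PowerSeries.mk bseq))
            * (HahnSeries.single m 1 * ofPowerSeries ℤ ℂ φ)
      = lam • (HahnSeries.single m 1 * ofPowerSeries ℤ ℂ φ))
    ↔ Eqn aseq bseq lam m (fun j => PowerSeries.coeff j φ) := by
  rw [laurentDeriv_sm, laurentDeriv_sm, laurentDeriv_sm, sm_mul_sm, sm_mul_sm, smul_sm]
  have e1 : m - 1 - 1 - 1 = m - 3 := by ring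
  have e2 : (-2 : ℤ) + (m - 1) = m - 3 := by ring
  have e3 : (-3 : ℤ) + m = m - 3 := by ring
  rw [e1, e2, e3, ← mul_add, ← mul_add, ← map_add, ← map_add]
  have e4 : HahnSeries.single m (1 : ℂ) * ofPowerSeries ℤ ℂ (lam • φ)
      = HahnSeries.single (m - 3) 1 * ofPowerSeries ℤ ℂ (PowerSeries.X ^ 3 * (lam • φ)) := by
    rw [map_mul, ofPowerSeries_X_pow, ← mul_assoc, single_mul_single, one_mul]
    norm_num
  rw [e4]
  constructor
  · intro h
    have h2 := mul_left_cancel₀ (a := HahnSeries.single (m - 3) (1 : ℂ))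
      (by simpa using HahnSeries.single_ne_zero (one_ne_zero (α := ℂ))) h
    have h3 := ofPowerSeries_injective h2
    intro j
    have h4 := congrArg (PowerSeries.coeff j) h3
    rw [map_add, map_add] at h4
    rw [PowerSeries.coeff_mul, PowerSeries.coeff_mul] at h4
    simp only [twist_coeff, PowerSeries.coeff_mk] at h4
    convert h4 using 2
    · push_cast; ring
    · rw [show PowerSeries.X ^ 3 * (lam • φ) = (lam • φ) * PowerSeries.X ^ 3 by ring,
        PowerSeries.coeff_mul_X_pow']
      by_cases hj : 3 ≤ j
      · rw [if_pos hj, if_pos hj, PowerSeries.coeff_smul, smul_eq_mul]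
      · rw [if_neg hj, if_neg hj, mul_zero]
  · intro h
    congr 1
    apply congrArg
    ext j
    have h4 := h j
    rw [map_add, map_add, PowerSeries.coeff_mul, PowerSeries.coeff_mul]
    simp only [twist_coeff, PowerSeries.coeff_mk]
    convert h4 using 2
    · push_cast; ring
    · rw [show PowerSeries.X ^ 3 * (lam • φ) = (lam • φ) * PowerSeries.X ^ 3 by ring,
        PowerSeries.coeff_mul_X_pow']
      by_cases hj : 3 ≤ j
      · rw [if_pos hj, if_pos hj, PowerSeries.coeff_smul, smul_eq_mul]
      · rw [if_neg hj, if_neg hj, mul_zero]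

lemma sum_split (f : ℕ → ℕ → ℂ) (j : ℕ) :
    ∑ p ∈ Finset.HasAntidiagonal.antidiagonal j, f p.1 p.2
      = f 0 j + ∑ i ∈ Finset.range j, f (i+1) (j-(i+1)) := by
  rw [Finset.Nat.sum_antidiagonal_eq_sum_range_succ f, Finset.sum_range_succ']
  simp [add_comm]

/-- the `m = -1` recursion form of the coefficient equation -/
def EqnR (aseq bseq : ℕ → ℂ) (lam : ℂ) (c : ℕ → ℂ) : Prop :=
  ∀ j : ℕ,
    (j : ℂ) * ((j : ℂ) - 2) * ((j : ℂ) - 4) * c j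
      + ∑ i ∈ Finset.range j,
          (aseq (i+1) * ((j : ℂ) - (i : ℂ) - 2) + bseq (i+1)) * c (j - (i+1))
      = lam * (if 3 ≤ j then c (j - 3) else 0)

lemma eqn_m1_iff (aseq bseq : ℕ → ℂ) (ha0 : aseq 0 = -3) (hb0 : bseq 0 = 3)
    (lam : ℂ) (c : ℕ → ℂ) :
    Eqn aseq bseq lam (-1) c ↔ EqnR aseq bseq lam c := by
  apply forall_congr'
  intro j
  rw [sum_split (fun k l => aseq k * (((l : ℂ) + ((-1 : ℤ) : ℂ)) * c l)) j,
    sum_split (fun k l => bseq k * c l) j, ha0, hb0]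
  have hs : (∑ i ∈ Finset.range j,
        aseq (i+1) * (((((j-(i+1) : ℕ)) : ℂ) + ((-1 : ℤ) : ℂ)) * c (j-(i+1))))
        + ∑ i ∈ Finset.range j, bseq (i+1) * c (j-(i+1))
      = ∑ i ∈ Finset.range j,
          (aseq (i+1) * ((j : ℂ) - (i : ℂ) - 2) + bseq (i+1)) * c (j - (i+1)) := by
    rw [← Finset.sum_add_distrib]
    apply Finset.sum_congr rfl
    intro i hi
    have hij : i + 1 ≤ j := by have := Finset.mem_range.mp hi; omega
    have hc : ((j - (i+1) : ℕ) : ℂ) = (j : ℂ) - (i : ℂ) - 1 := by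
      rw [Nat.cast_sub hij]; push_cast; ring
    rw [hc]; push_cast; ring
  constructor
  · intro h
    linear_combination h - hs
  · intro h
    linear_combination h + hs

lemma T_ne_zero {j : ℕ} (h0 : j ≠ 0) (h2 : j ≠ 2) (h4 : j ≠ 4) :
    (j : ℂ) * ((j : ℂ) - 2) * ((j : ℂ) - 4) ≠ 0 := by
  have a0 : (j : ℂ) ≠ 0 := Nat.cast_ne_zero.2 h0
  have a2 : (j : ℂ) - 2 ≠ 0 := sub_ne_zero.2 (by exact_mod_cast h2)
  have a4 : (j : ℂ) - 4 ≠ 0 := sub_ne_zero.2 (by exact_mod_cast h4)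
  exact mul_ne_zero (mul_ne_zero a0 a2) a4

lemma eqnR_unique {aseq bseq : ℕ → ℂ} {lam : ℂ} {c : ℕ → ℂ}
    (h : EqnR aseq bseq lam c) (h0 : c 0 = 0) (h2 : c 2 = 0) (h4 : c 4 = 0) :
    ∀ j, c j = 0 := by
  intro j
  induction j using Nat.strong_induction_on with
  | _ j ih =>
    by_cases hj0 : j = 0; · rw [hj0]; exact h0
    by_cases hj2 : j = 2; · rw [hj2]; exact h2
    by_cases hj4 : j = 4; · rw [hj4]; exact h4
    have hEq := h j
    have hsum : ∑ i ∈ Finset.range j,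
        (aseq (i+1) * ((j : ℂ) - (i : ℂ) - 2) + bseq (i+1)) * c (j - (i+1)) = 0 := by
      apply Finset.sum_eq_zero
      intro i hi
      have : i < j := Finset.mem_range.1 hi
      rw [ih (j - (i+1)) (by omega), mul_zero]
    have hif : (if 3 ≤ j then c (j - 3) else 0) = 0 := by
      split_ifs with h3
      · exact ih (j - 3) (by omega)
      · rfl
    rw [hsum, hif, mul_zero, add_zero] at hEq
    exact (mul_eq_zero.1 hEq).resolve_left (T_ne_zero hj0 hj2 hj4)

lemma eqnR_comb {aseq bseq : ℕ → ℂ} {lam : ℂ} {c d : ℕ → ℂ}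
    (hc : EqnR aseq bseq lam c) (hd : EqnR aseq bseq lam d) (x y : ℂ) :
    EqnR aseq bseq lam (fun j => x * c j + y * d j) := by
  intro j
  have hc' := hc j
  have hd' := hd j
  have hsum : ∑ i ∈ Finset.range j,
        (aseq (i+1) * ((j : ℂ) - (i : ℂ) - 2) + bseq (i+1))
          * (x * c (j - (i+1)) + y * d (j - (i+1)))
      = x * (∑ i ∈ Finset.range j,
            (aseq (i+1) * ((j : ℂ) - (i : ℂ) - 2) + bseq (i+1)) * c (j - (i+1)))
        + y * (∑ i ∈ Finset.range j,
            (aseq (i+1) * ((j : ℂ) - (i : ℂ) - 2) + bseq (i+1)) * d (j - (i+1))) := by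
    rw [Finset.mul_sum, Finset.mul_sum, ← Finset.sum_add_distrib]
    exact Finset.sum_congr rfl fun i _ => by ring
  by_cases h3 : 3 ≤ j
  · simp only [if_pos h3] at hc' hd' ⊢
    rw [hsum]
    linear_combination x * hc' + y * hd'
  · simp only [if_neg h3] at hc' hd' ⊢
    rw [hsum]
    linear_combination x * hc' + y * hd'

noncomputable def recC (aseq bseq : ℕ → ℂ) (lam i0 i2 i4 : ℂ) : ℕ → ℂ := fun j =>
  if j = 0 then i0 else if j = 2 then i2 else if j = 4 then i4 else
    (lam * (if h : 3 ≤ j then recC aseq bseq lam i0 i2 i4 (j - 3) else 0)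
      - ∑ i ∈ (Finset.range j).attach,
          (aseq (i.1+1) * ((j : ℂ) - (i.1 : ℂ) - 2) + bseq (i.1+1))
            * recC aseq bseq lam i0 i2 i4 (j - (i.1+1)))
    / ((j : ℂ) * ((j : ℂ) - 2) * ((j : ℂ) - 4))
  termination_by j => j
  decreasing_by
  · omega
  · have := i.2; simp only [Finset.mem_range] at this; omega

lemma recC_unfold (aseq bseq : ℕ → ℂ) (lam i0 i2 i4 : ℂ) (j : ℕ)
    (h0 : j ≠ 0) (h2 : j ≠ 2) (h4 : j ≠ 4) :
    recC aseq bseq lam i0 i2 i4 j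
      = (lam * (if 3 ≤ j then recC aseq bseq lam i0 i2 i4 (j - 3) else 0)
          - ∑ i ∈ Finset.range j,
              (aseq (i+1) * ((j : ℂ) - (i : ℂ) - 2) + bseq (i+1))
                * recC aseq bseq lam i0 i2 i4 (j - (i+1)))
        / ((j : ℂ) * ((j : ℂ) - 2) * ((j : ℂ) - 4)) := by
  conv_lhs => rw [recC]
  rw [if_neg h0, if_neg h2, if_neg h4, dite_eq_ite,
    Finset.sum_attach (Finset.range j) (fun i =>
      (aseq (i+1) * ((j : ℂ) - (i : ℂ) - 2) + bseq (i+1))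
        * recC aseq bseq lam i0 i2 i4 (j - (i+1)))]

@[simp] lemma recC_zero (aseq bseq : ℕ → ℂ) (lam i0 i2 i4 : ℂ) :
    recC aseq bseq lam i0 i2 i4 0 = i0 := by rw [recC]; norm_num
@[simp] lemma recC_two (aseq bseq : ℕ → ℂ) (lam i0 i2 i4 : ℂ) :
    recC aseq bseq lam i0 i2 i4 2 = i2 := by rw [recC]; norm_num
@[simp] lemma recC_four (aseq bseq : ℕ → ℂ) (lam i0 i2 i4 : ℂ) :
    recC aseq bseq lam i0 i2 i4 4 = i4 := by rw [recC]; norm_num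

lemma recC_one (aseq bseq : ℕ → ℂ) (lam i0 i2 i4 : ℂ) :
    recC aseq bseq lam i0 i2 i4 1 = (aseq 1 - bseq 1) * i0 / 3 := by
  rw [recC_unfold _ _ _ _ _ _ _ (by norm_num) (by norm_num) (by norm_num)]
  norm_num [Finset.sum_range_one]
  ring

lemma recC_three (aseq bseq : ℕ → ℂ) (lam i0 i2 i4 : ℂ) :
    recC aseq bseq lam i0 i2 i4 3
      = (lam * i0 - ((aseq 1 + bseq 1) * i2
          + bseq 2 * recC aseq bseq lam i0 i2 i4 1 + (bseq 3 - aseq 3) * i0)) / (-3) := by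
  rw [recC_unfold _ _ _ _ _ _ _ (by norm_num) (by norm_num) (by norm_num),
    Finset.sum_range_succ, Finset.sum_range_succ, Finset.sum_range_one,
    if_pos (by norm_num : 3 ≤ 3)]
  norm_num [recC_zero, recC_two]
  ring_nf
  simp

lemma recC_eqnR (aseq bseq : ℕ → ℂ) (lam i0 i2 i4 : ℂ)
    (hO2 : bseq 1 * recC aseq bseq lam i0 i2 i4 1 + (bseq 2 - aseq 2) * i0 = 0)
    (hO4 : (aseq 1 * 2 + bseq 1) * recC aseq bseq lam i0 i2 i4 3
        + (aseq 2 + bseq 2) * i2 + bseq 3 * recC aseq bseq lam i0 i2 i4 1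
        + (bseq 4 - aseq 4) * i0
      = lam * recC aseq bseq lam i0 i2 i4 1) :
    EqnR aseq bseq lam (recC aseq bseq lam i0 i2 i4) := by
  intro j
  by_cases h0 : j = 0
  · subst h0; norm_num
  by_cases h2 : j = 2
  · subst h2
    rw [Finset.sum_range_succ, Finset.sum_range_one]
    norm_num [recC_zero, recC_two]
    linear_combination hO2
  by_cases h4 : j = 4
  · subst h4
    rw [Finset.sum_range_succ, Finset.sum_range_succ, Finset.sum_range_succ,
      Finset.sum_range_one, if_pos (by norm_num : 3 ≤ 4)]
    norm_num [recC_zero, recC_two, recC_four]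
    linear_combination hO4
  · rw [recC_unfold _ _ _ _ _ _ _ h0 h2 h4]
    rw [mul_div_assoc']
    rw [mul_comm ((j : ℂ) * ((j : ℂ) - 2) * ((j : ℂ) - 4)) _, mul_div_assoc,
      div_self (T_ne_zero h0 h2 h4), mul_one]
    ring

lemma laurentDeriv_add (f g : LaurentSeries ℂ) :
    laurentDeriv (f + g) = laurentDeriv f + laurentDeriv g := by
  ext n; simp [laurentDeriv_coeff, mul_add]

lemma laurentDeriv_smul (x : ℂ) (f : LaurentSeries ℂ) :
    laurentDeriv (x • f) = x • laurentDeriv f := by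
  ext n; simp [laurentDeriv_coeff]; ring

lemma sol_comb (a b : LaurentSeries ℂ) (lam x y : ℂ) {f g : LaurentSeries ℂ}
    (hf : laurentDeriv (laurentDeriv (laurentDeriv f)) + a * laurentDeriv f + b * f = lam • f)
    (hg : laurentDeriv (laurentDeriv (laurentDeriv g)) + a * laurentDeriv g + b * g = lam • g) :
    laurentDeriv (laurentDeriv (laurentDeriv (x • f + y • g)))
        + a * laurentDeriv (x • f + y • g) + b * (x • f + y • g)
      = lam • (x • f + y • g) := by
  simp only [laurentDeriv_add, laurentDeriv_smul]
  simp only [← HahnSeries.single_zero_mul_eq_smul] at hf hg ⊢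
  linear_combination (HahnSeries.single (0:ℤ) x) * hf + (HahnSeries.single (0:ℤ) y) * hg

lemma sm_coeff_m1 (φ : PowerSeries ℂ) (j : ℕ) :
    (HahnSeries.single (-1 : ℤ) 1 * ofPowerSeries ℤ ℂ φ).coeff ((j : ℤ) - 1)
      = PowerSeries.coeff j φ := by
  rw [sm_coeff, if_pos (by omega)]
  have h : ((j : ℤ) - 1 - (-1)).toNat = j := by omega
  rw [h]

lemma sm_coeff_neg (φ : PowerSeries ℂ) {n : ℤ} (hn : n < -1) :
    (HahnSeries.single (-1 : ℤ) 1 * ofPowerSeries ℤ ℂ φ).coeff n = 0 := by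
  rw [sm_coeff, if_neg (by omega)]

/-- every solution is supported in degrees ≥ -1 and its coefficients satisfy `EqnR` -/
lemma sol_eqnR (aseq bseq : ℕ → ℂ) (ha0 : aseq 0 = -3) (hb0 : bseq 0 = 3)
    (lam : ℂ) (ψ : LaurentSeries ℂ)
    (hψ : laurentDeriv (laurentDeriv (laurentDeriv ψ))
        + (HahnSeries.single (-2 : ℤ) 1 * ofPowerSeries ℤ ℂ (PowerSeries.mk aseq))
            * laurentDeriv ψ
        + (HahnSeries.single (-3 : ℤ) 1 * ofPowerSeries ℤ ℂ (PowerSeries.mk bseq)) * ψ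
      = lam • ψ) :
    EqnR aseq bseq lam (fun j => ψ.coeff ((j : ℤ) - 1)) ∧
      ∀ n : ℤ, n < -1 → ψ.coeff n = 0 := by
  by_cases h0 : ψ = 0
  · subst h0
    constructor
    · intro j
      simp
    · intro n _; simp
  -- nonzero solution: its order o satisfies the indicial equation
  obtain ⟨χ, hχ⟩ : ∃ χ : PowerSeries ℂ,
      ψ = HahnSeries.single (-1 : ℤ) 1 * ofPowerSeries ℤ ℂ χ := by
    set o := ψ.order with ho
    set φ := ψ.powerSeriesPart with hφ
    have hrep : HahnSeries.single o 1 * ofPowerSeries ℤ ℂ φ = ψ :=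
      ψ.single_order_mul_powerSeriesPart
    have hEqn : Eqn aseq bseq lam o (fun j => PowerSeries.coeff j φ) := by
      apply (key aseq bseq lam o φ).1
      rw [hrep]; exact hψ
    have hE0 := hEqn 0
    simp only [Finset.Nat.antidiagonal_zero, Finset.sum_singleton, Nat.cast_zero, zero_add,
      ha0, hb0] at hE0
    rw [if_neg (by norm_num : ¬ (3:ℕ) ≤ 0), mul_zero] at hE0
    have hφ0 : PowerSeries.coeff 0 φ ≠ 0 := by
      rw [hφ, ψ.powerSeriesPart_coeff]
      simpa using mt ψ.coeff_order_eq_zero.mp h0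
    have hQ : ((o : ℂ) + 1) * ((o : ℂ) - 1) * ((o : ℂ) - 3) = 0 := by
      rcases mul_eq_zero.1 (show (((o:ℂ) + 1) * ((o:ℂ) - 1) * ((o:ℂ) - 3))
          * PowerSeries.coeff 0 φ = 0 by linear_combination hE0) with h | h
      · exact h
      · exact absurd h hφ0
    have ho3 : o = -1 ∨ o = 1 ∨ o = 3 := by
      rcases mul_eq_zero.1 hQ with h | h
      · rcases mul_eq_zero.1 h with h' | h'
        · left; exact_mod_cast eq_neg_of_add_eq_zero_left h'
        · right; left; exact_mod_cast sub_eq_zero.1 h'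
      · right; right; exact_mod_cast sub_eq_zero.1 h
    -- rewrite with base -1
    have hex : ∃ t : ℕ, o = -1 + (t : ℤ) := by
      rcases ho3 with h | h | h
      · exact ⟨0, by omega⟩
      · exact ⟨2, by omega⟩
      · exact ⟨4, by omega⟩
    obtain ⟨t, ht⟩ := hex
    refine ⟨PowerSeries.X ^ t * φ, ?_⟩
    rw [map_mul, ofPowerSeries_X_pow, ← mul_assoc, single_mul_single, one_mul, ← ht, hrep]
  constructor
  · have hEqn : Eqn aseq bseq lam (-1) (fun j => PowerSeries.coeff j χ) := by
      apply (key aseq bseq lam (-1) χ).1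
      rw [← hχ]; exact hψ
    have hfun : (fun j : ℕ => ψ.coeff ((j : ℤ) - 1))
        = fun j => PowerSeries.coeff j χ := by
      funext j; rw [hχ, sm_coeff_m1]
    rw [hfun]
    exact (eqn_m1_iff aseq bseq ha0 hb0 lam _).1 hEqn
  · intro n hn
    rw [hχ, sm_coeff_neg _ hn]

lemma eqnR_low {aseq bseq : ℕ → ℂ} {lam : ℂ} {c : ℕ → ℂ} (h : EqnR aseq bseq lam c) :
    (3 * c 1 + (bseq 1 - aseq 1) * c 0 = 0) ∧
    (bseq 1 * c 1 + (bseq 2 - aseq 2) * c 0 = 0) ∧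
    ((-3) * c 3 + (aseq 1 + bseq 1) * c 2 + bseq 2 * c 1 + (bseq 3 - aseq 3) * c 0
        = lam * c 0) ∧
    ((aseq 1 * 2 + bseq 1) * c 3 + (aseq 2 + bseq 2) * c 2 + bseq 3 * c 1
        + (bseq 4 - aseq 4) * c 0 = lam * c 1) := by
  have h1 := h 1
  have h2 := h 2
  have h3 := h 3
  have h4 := h 4
  rw [Finset.sum_range_one] at h1
  rw [Finset.sum_range_succ, Finset.sum_range_one] at h2
  rw [Finset.sum_range_succ, Finset.sum_range_succ, Finset.sum_range_one,
    if_pos (by norm_num : 3 ≤ 3)] at h3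
  rw [Finset.sum_range_succ, Finset.sum_range_succ, Finset.sum_range_succ,
    Finset.sum_range_one, if_pos (by norm_num : 3 ≤ 4)] at h4
  norm_num at h1 h2 h3 h4
  exact ⟨by linear_combination h1, by linear_combination h2,
    by linear_combination h3, by linear_combination h4⟩

lemma coeff_shift_all {u : LaurentSeries ℂ}
    (hj : ∀ j : ℕ, u.coeff ((j : ℤ) - 1) = 0) (hneg : ∀ n : ℤ, n < -1 → u.coeff n = 0) :
    u = 0 := by
  ext n
  rw [HahnSeries.coeff_zero]
  by_cases hn : n < -1
  · exact hneg n hn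
  · have h : n = (((n + 1).toNat : ℕ) : ℤ) - 1 := by omega
    rw [h]
    exact hj _

lemma forward_coords (aseq bseq : ℕ → ℂ) (ha0 : aseq 0 = -3) (hb0 : bseq 0 = 3)
    (lam : ℂ) {ψ₁ ψ₂ ψ₃ : LaurentSeries ℂ}
    (h1 : laurentDeriv (laurentDeriv (laurentDeriv ψ₁))
        + (HahnSeries.single (-2 : ℤ) 1 * ofPowerSeries ℤ ℂ (PowerSeries.mk aseq))
            * laurentDeriv ψ₁
        + (HahnSeries.single (-3 : ℤ) 1 * ofPowerSeries ℤ ℂ (PowerSeries.mk bseq)) * ψ₁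
      = lam • ψ₁)
    (h2 : laurentDeriv (laurentDeriv (laurentDeriv ψ₂))
        + (HahnSeries.single (-2 : ℤ) 1 * ofPowerSeries ℤ ℂ (PowerSeries.mk aseq))
            * laurentDeriv ψ₂
        + (HahnSeries.single (-3 : ℤ) 1 * ofPowerSeries ℤ ℂ (PowerSeries.mk bseq)) * ψ₂
      = lam • ψ₂)
    (h3 : laurentDeriv (laurentDeriv (laurentDeriv ψ₃))
        + (HahnSeries.single (-2 : ℤ) 1 * ofPowerSeries ℤ ℂ (PowerSeries.mk aseq))
            * laurentDeriv ψ₃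
        + (HahnSeries.single (-3 : ℤ) 1 * ofPowerSeries ℤ ℂ (PowerSeries.mk bseq)) * ψ₃
      = lam • ψ₃)
    (hli : LinearIndependent ℂ ![ψ₁, ψ₂, ψ₃]) (t : Fin 3 → ℂ) :
    ∃ c : ℕ → ℂ, EqnR aseq bseq lam c ∧ c 0 = t 0 ∧ c 2 = t 1 ∧ c 4 = t 2 := by
  set a := HahnSeries.single (-2 : ℤ) 1 * ofPowerSeries ℤ ℂ (PowerSeries.mk aseq) with hadef
  set b := HahnSeries.single (-3 : ℤ) 1 * ofPowerSeries ℤ ℂ (PowerSeries.mk bseq) with hbdef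
  set v : Fin 3 → Fin 3 → ℂ := fun i =>
    ![(![ψ₁, ψ₂, ψ₃] i).coeff (-1), (![ψ₁, ψ₂, ψ₃] i).coeff 1,
      (![ψ₁, ψ₂, ψ₃] i).coeff 3] with hv
  have combsol : ∀ g : Fin 3 → ℂ,
      laurentDeriv (laurentDeriv (laurentDeriv (g 0 • ψ₁ + (g 1 • ψ₂ + g 2 • ψ₃))))
          + a * laurentDeriv (g 0 • ψ₁ + (g 1 • ψ₂ + g 2 • ψ₃))
          + b * (g 0 • ψ₁ + (g 1 • ψ₂ + g 2 • ψ₃))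
        = lam • (g 0 • ψ₁ + (g 1 • ψ₂ + g 2 • ψ₃)) := by
    intro g
    have hw := sol_comb a b lam (g 1) (g 2) h2 h3
    have := sol_comb a b lam (g 0) 1 h1 hw
    rwa [one_smul] at this
  have combcoeff : ∀ (g : Fin 3 → ℂ) (n : ℤ),
      (g 0 • ψ₁ + (g 1 • ψ₂ + g 2 • ψ₃)).coeff n
        = g 0 * ψ₁.coeff n + (g 1 * ψ₂.coeff n + g 2 * ψ₃.coeff n) := by
    intro g n
    simp [HahnSeries.coeff_add, HahnSeries.coeff_smul]
  have hvli : LinearIndependent ℂ v := by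
    rw [Fintype.linearIndependent_iff]
    intro g hg
    have hgk : ∀ k : Fin 3, g 0 * v 0 k + g 1 * v 1 k + g 2 * v 2 k = 0 := by
      intro k
      have := congrFun hg k
      simpa [Fin.sum_univ_three] using this
    set u := g 0 • ψ₁ + (g 1 • ψ₂ + g 2 • ψ₃) with hu
    have hsolu := combsol g
    have hEu := sol_eqnR aseq bseq ha0 hb0 lam u hsolu
    have hc : ∀ j : ℕ, u.coeff ((j : ℤ) - 1) = 0 := by
      apply eqnR_unique hEu.1
      · have := hgk 0
        simp [hv] at this
        rw [show ((0:ℕ) : ℤ) - 1 = (-1 : ℤ) by norm_num, hu, combcoeff]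
        simpa [Matrix.cons_val_zero] using by linear_combination this
      · have := hgk 1
        simp [hv] at this
        rw [show ((2:ℕ) : ℤ) - 1 = (1 : ℤ) by norm_num, hu, combcoeff]
        simpa using by linear_combination this
      · have := hgk 2
        simp [hv] at this
        rw [show ((4:ℕ) : ℤ) - 1 = (3 : ℤ) by norm_num, hu, combcoeff]
        simpa using by linear_combination this
    have hu0 : u = 0 := coeff_shift_all hc hEu.2
    have hlin := Fintype.linearIndependent_iff.1 hli g
    have hsum : ∑ i : Fin 3, g i • ![ψ₁, ψ₂, ψ₃] i = 0 := by
      rw [Fin.sum_univ_three]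
      simpa [add_assoc] using hu0
    exact hlin hsum
  have hspan := hvli.span_eq_top_of_card_eq_finrank
    (by simp [Module.finrank_fin_fun])
  have ht : t ∈ Submodule.span ℂ (Set.range v) := by rw [hspan]; trivial
  obtain ⟨g, hgt⟩ := (Submodule.mem_span_range_iff_exists_fun ℂ).1 ht
  have hgk : ∀ k : Fin 3, g 0 * v 0 k + (g 1 * v 1 k + g 2 * v 2 k) = t k := by
    intro k
    have := congrFun hgt k
    simpa [Fin.sum_univ_three, add_assoc] using this
  refine ⟨fun j => (g 0 • ψ₁ + (g 1 • ψ₂ + g 2 • ψ₃)).coeff ((j : ℤ) - 1),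
    (sol_eqnR aseq bseq ha0 hb0 lam _ (combsol g)).1, ?_, ?_, ?_⟩
  · show (g 0 • ψ₁ + (g 1 • ψ₂ + g 2 • ψ₃)).coeff ((0:ℕ) - 1 : ℤ) = _
    rw [show ((0:ℕ) : ℤ) - 1 = (-1 : ℤ) by norm_num, combcoeff]
    have := hgk 0
    simp [hv] at this
    linear_combination this
  · show (g 0 • ψ₁ + (g 1 • ψ₂ + g 2 • ψ₃)).coeff ((2:ℕ) - 1 : ℤ) = _
    rw [show ((2:ℕ) : ℤ) - 1 = (1 : ℤ) by norm_num, combcoeff]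
    have := hgk 1
    simp [hv] at this
    linear_combination this
  · show (g 0 • ψ₁ + (g 1 • ψ₂ + g 2 • ψ₃)).coeff ((4:ℕ) - 1 : ℤ) = _
    rw [show ((4:ℕ) : ℤ) - 1 = (3 : ℤ) by norm_num, combcoeff]
    have := hgk 2
    simp [hv] at this
    linear_combination this


/-- Lemma 4.1: for the third-order operator `L = ∂³ + a(z)∂ + b(z)` with
`a = Σ_{k≥0} a_k z^{k−2}`, `b = Σ_{k≥0} b_k z^{k−3}`, `a₀ = −3`, `b₀ = 3`
(indices `−1, 1, 3` at `0`), the equation `ψ''' + aψ' + bψ = λψ` admits three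
linearly independent formal Laurent series solutions for every `λ ∈ ℂ` if and
only if `a₁ = 0`, `b₂ = 0`, `a₂ = −b₁²/3` and `b₄ = a₄ + b₁a₃/3`. -/
theorem third_order_trivial_monodromy_iff
    (aseq bseq : ℕ → ℂ) (ha0 : aseq 0 = -3) (hb0 : bseq 0 = 3)
    (a b : LaurentSeries ℂ)
    (ha : a = HahnSeries.single (-2 : ℤ) 1
        * HahnSeries.ofPowerSeries ℤ ℂ (PowerSeries.mk aseq))
    (hb : b = HahnSeries.single (-3 : ℤ) 1
        * HahnSeries.ofPowerSeries ℤ ℂ (PowerSeries.mk bseq)) :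
    (∀ lam : ℂ, ∃ ψ₁ ψ₂ ψ₃ : LaurentSeries ℂ,
        laurentDeriv (laurentDeriv (laurentDeriv ψ₁)) + a * laurentDeriv ψ₁ + b * ψ₁
          = lam • ψ₁ ∧
        laurentDeriv (laurentDeriv (laurentDeriv ψ₂)) + a * laurentDeriv ψ₂ + b * ψ₂
          = lam • ψ₂ ∧
        laurentDeriv (laurentDeriv (laurentDeriv ψ₃)) + a * laurentDeriv ψ₃ + b * ψ₃
          = lam • ψ₃ ∧
        LinearIndependent ℂ ![ψ₁, ψ₂, ψ₃])
      ↔ (aseq 1 = 0 ∧ bseq 2 = 0 ∧ aseq 2 = -(bseq 1) ^ 2 / 3 ∧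
          bseq 4 = aseq 4 + bseq 1 * aseq 3 / 3) := by
  subst ha hb
  constructor
  · -- forward direction
    intro H
    obtain ⟨ψ₁, ψ₂, ψ₃, h1, h2, h3, hli⟩ := H 0
    obtain ⟨c, hcE, hc0, hc2, hc4⟩ :=
      forward_coords aseq bseq ha0 hb0 0 h1 h2 h3 hli ![1, 0, 0]
    obtain ⟨d, hdE, hd0, hd2, hd4⟩ :=
      forward_coords aseq bseq ha0 hb0 0 h1 h2 h3 hli ![0, 1, 0]
    obtain ⟨ψ₁', ψ₂', ψ₃', h1', h2', h3', hli'⟩ := H 3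
    obtain ⟨e, heE, he0, he2, he4⟩ :=
      forward_coords aseq bseq ha0 hb0 3 h1' h2' h3' hli' ![1, 0, 0]
    simp only [Matrix.cons_val_zero, Matrix.cons_val_one,
      Matrix.head_cons] at hc0 hc2 hd0 hd2 he0 he2
    obtain ⟨A1, A2, A3, A4⟩ := eqnR_low hcE
    obtain ⟨D1, D2, D3, D4⟩ := eqnR_low hdE
    obtain ⟨B1, B2, B3, B4⟩ := eqnR_low heE
    rw [hc0] at A1 A2 A3 A4
    rw [hc2] at A3 A4
    rw [hd0] at D1 D2 D3 D4
    rw [hd2] at D3 D4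
    rw [he0] at B1 B2 B3 B4
    rw [he2] at B3 B4
    -- solve the low-degree system
    have hp : c 1 = (aseq 1 - bseq 1) / 3 := by linear_combination (1/3) * A1
    have hp' : e 1 = (aseq 1 - bseq 1) / 3 := by linear_combination (1/3) * B1
    have hq' : e 3 = c 3 - 1 := by
      linear_combination (1/3) * A3 - (1/3) * B3 - (bseq 2/3) * hp + (bseq 2/3) * hp'
    have ha1 : aseq 1 = 0 := by
      linear_combination (1/3) * A4 - (1/3) * B4 + ((2*aseq 1 + bseq 1)/3) * hq'
        - (bseq 3/3) * hp + (bseq 3/3 - 1) * hp'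
    have hr : d 1 = 0 := by linear_combination (1/3) * D1
    have hs : d 3 = bseq 1 / 3 := by
      linear_combination (-(1/3)) * D3 + (bseq 2/3) * hr + (1/3) * ha1
    have hb2 : bseq 2 = 0 := by
      linear_combination (1/2) * A2 + (1/2) * D4 - ((2*aseq 1 + bseq 1)/2) * hs
        - (bseq 1/2) * hp - (bseq 3/2) * hr - (bseq 1/2) * ha1
    have ha2 : aseq 2 = -(bseq 1) ^ 2 / 3 := by
      linear_combination (-1) * A2 + bseq 1 * hp + hb2 + (bseq 1/3) * ha1
    have hq : c 3 = (bseq 3 - aseq 3) / 3 := by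
      linear_combination (-(1/3)) * A3 + (c 1/3) * hb2
    have hb4 : bseq 4 = aseq 4 + bseq 1 * aseq 3 / 3 := by
      linear_combination A4 - bseq 1 * hq - bseq 3 * hp - (2 * c 3 + bseq 3/3) * ha1
    exact ⟨ha1, hb2, ha2, hb4⟩
  · -- backward direction
    rintro ⟨ha1, hb2, ha2, hb4⟩ lam
    have mkSol : ∀ i0 i2 i4 : ℂ,
        EqnR aseq bseq lam (recC aseq bseq lam i0 i2 i4) →
        laurentDeriv (laurentDeriv (laurentDeriv
            (HahnSeries.single (-1 : ℤ) 1
              * ofPowerSeries ℤ ℂ (PowerSeries.mk (recC aseq bseq lam i0 i2 i4)))))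
          + (HahnSeries.single (-2 : ℤ) 1 * ofPowerSeries ℤ ℂ (PowerSeries.mk aseq))
              * laurentDeriv (HahnSeries.single (-1 : ℤ) 1
                * ofPowerSeries ℤ ℂ (PowerSeries.mk (recC aseq bseq lam i0 i2 i4)))
          + (HahnSeries.single (-3 : ℤ) 1 * ofPowerSeries ℤ ℂ (PowerSeries.mk bseq))
              * (HahnSeries.single (-1 : ℤ) 1
                * ofPowerSeries ℤ ℂ (PowerSeries.mk (recC aseq bseq lam i0 i2 i4)))
          = lam • (HahnSeries.single (-1 : ℤ) 1
              * ofPowerSeries ℤ ℂ (PowerSeries.mk (recC aseq bseq lam i0 i2 i4))) := by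
      intro i0 i2 i4 hE
      apply (key aseq bseq lam (-1) _).2
      have hfun : (fun j => PowerSeries.coeff j (PowerSeries.mk (recC aseq bseq lam i0 i2 i4)))
          = recC aseq bseq lam i0 i2 i4 := funext fun j => PowerSeries.coeff_mk j _
      rw [hfun]
      exact (eqn_m1_iff aseq bseq ha0 hb0 lam _).2 hE
    have hE1 : EqnR aseq bseq lam (recC aseq bseq lam 1 0 0) := by
      apply recC_eqnR
      · simp only [recC_one, ha1, hb2, ha2]; ring
      · simp only [recC_three, recC_one, ha1, hb2, ha2, hb4]; ring
    have hE2 : EqnR aseq bseq lam (recC aseq bseq lam 0 1 0) := by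
      apply recC_eqnR
      · simp only [recC_one, ha1, hb2, ha2]; ring
      · simp only [recC_three, recC_one, ha1, hb2, ha2, hb4]; ring
    have hE3 : EqnR aseq bseq lam (recC aseq bseq lam 0 0 1) := by
      apply recC_eqnR
      · simp only [recC_one, ha1, hb2, ha2]; ring
      · simp only [recC_three, recC_one, ha1, hb2, ha2, hb4]; ring
    refine ⟨_, _, _, mkSol 1 0 0 hE1, mkSol 0 1 0 hE2, mkSol 0 0 1 hE3, ?_⟩
    rw [Fintype.linearIndependent_iff]
    intro g hg
    have hco : ∀ j : ℕ,
        g 0 * recC aseq bseq lam 1 0 0 j + g 1 * recC aseq bseq lam 0 1 0 j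
          + g 2 * recC aseq bseq lam 0 0 1 j = 0 := by
      intro j
      have := congrArg (fun x => HahnSeries.coeff x ((j : ℤ) - 1)) hg
      simp only [Fin.sum_univ_three, Matrix.cons_val_zero, Matrix.cons_val_one,
        Matrix.head_cons, Matrix.cons_val_two, Matrix.tail_cons,
        HahnSeries.coeff_add, HahnSeries.coeff_smul, smul_eq_mul,
        HahnSeries.coeff_zero] at this
      rw [sm_coeff_m1, sm_coeff_m1, sm_coeff_m1] at this
      simpa [PowerSeries.coeff_mk] using this
    have hg0 := hco 0
    have hg1 := hco 2
    have hg2 := hco 4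
    simp only [recC_zero, recC_two, recC_four] at hg0 hg1 hg2
    have e0 : g 0 = 0 := by linear_combination hg0
    have e1 : g 1 = 0 := by linear_combination hg1
    have e2 : g 2 = 0 := by linear_combination hg2
    intro i
    fin_cases i <;> assumption
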